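/- Modulus of continuity for a power of the Fraenkel asymmetry: for n ≥ 2 and measurable sets E, E' ⊂ ℝⁿ of positive finite measure, | |E| D(E)^{n/(n−1)} − |E'| D(E')^{n/(n−1)} | ≤ 2^{n/(n−1)} · (n+1)/(n−1) · |E Δ E'|. -/

import Mathlib

open MeasureTheory Metric Set

/-- The Fraenkel asymmetry of a measurable set `E ⊆ ℝⁿ`. -/
noncomputable def fraenkelAsymmetry {n : ℕ} (E : Set (EuclideanSpace ℝ (Fin n))) : ℝ :=
  sInf {t : ℝ | ∃ (x : EuclideanSpace ℝ (Fin n)) (r : ℝ),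
    volume (ball x r) = volume E ∧
    t = (volume (symmDiff E (ball x r))).toReal / (volume E).toReal}


-- Bernoulli-type lemma
lemma myBern {x y p : ℝ} (hy : 0 ≤ y) (hxy : y ≤ x) (hp : 1 ≤ p) :
    x ^ p - y ^ p ≤ p * x ^ (p - 1) * (x - y) := by
  have hx : 0 ≤ x := hy.trans hxy
  rcases hx.eq_or_lt with h | h
  · have hy0 : y = 0 := le_antisymm (by linarith) hy
    rw [hy0, ← h]
    simp [Real.zero_rpow (by linarith : p ≠ 0)]
  · set t := y / x with ht
    have hyx : y = t * x := by rw [ht, div_mul_cancel₀ _ h.ne']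
    have ht0 : 0 ≤ t := div_nonneg hy h.le
    have ht1 : t ≤ 1 := div_le_one_of_le₀ hxy h.le
    have hb := one_add_mul_self_le_rpow_one_add (by linarith : (-1:ℝ) ≤ t - 1) hp
    rw [show (1:ℝ) + (t-1) = t by ring] at hb
    have hyp : y ^ p = t ^ p * x ^ p := by rw [hyx, Real.mul_rpow ht0 hx]
    have hxp : x ^ (p - 1) * x = x ^ p := by
      calc x ^ (p-1) * x = x ^ (p-1) * x ^ (1:ℝ) := by rw [Real.rpow_one]
        _ = x ^ (p-1+1) := (Real.rpow_add h _ _).symm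
        _ = x ^ p := by norm_num
    rw [hyp, hyx]
    have e : p * x ^ (p-1) * (x - t * x) = p * x ^ p * (1 - t) := by
      rw [← hxp]; ring
    rw [e]
    nlinarith [mul_le_mul_of_nonneg_right hb (Real.rpow_nonneg hx p)]

lemma myYoung {D D' p : ℝ} (hD : 0 ≤ D) (hD' : 0 ≤ D') (hp : 1 < p) :
    p * D ^ (p-1) * D' ≤ (p-1) * D ^ p + D' ^ p := by
  have hpq := (Real.HolderConjugate.conjExponent hp).symm
  have hy := Real.young_inequality_of_nonneg (Real.rpow_nonneg hD (p-1)) hD' hpq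
  have hp0 : (0:ℝ) < p := by linarith
  have hp1 : (0:ℝ) < p - 1 := by linarith
  have h1 : (D ^ (p-1)) ^ (Real.conjExponent p) = D ^ p := by
    rw [← Real.rpow_mul hD]
    congr 1
    rw [Real.conjExponent]
    field_simp
  rw [h1] at hy
  have e : D ^ p / Real.conjExponent p = (p-1) * D ^ p / p := by
    rw [Real.conjExponent]
    field_simp
  rw [e] at hy
  have := mul_le_mul_of_nonneg_left hy hp0.le
  calc p * D ^ (p-1) * D' = p * (D ^ (p-1) * D') := by ring
    _ ≤ p * ((p-1) * D ^ p / p + D' ^ p / p) := this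
    _ = (p-1) * D ^ p + D' ^ p := by field_simp

lemma myOneSided {p m m' D D' δ : ℝ} (hp : 1 < p) (hm : 0 < m)
    (hD0 : 0 ≤ D) (hD2 : D ≤ 2) (hD0' : 0 ≤ D') (hD2' : D' ≤ 2) (hδ : 0 ≤ δ)
    (h1 : m * D ≤ m' * D' + 2 * δ) (h2 : m ≤ m' + δ) (h3 : m' ≤ m + δ) :
    m * D ^ p - m' * D' ^ p ≤ 2 ^ p * (2 * p - 1) * δ := by
  have hp1 : (1:ℝ) ≤ p := hp.le
  have hpm1 : (0:ℝ) ≤ p - 1 := by linarith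
  have hDp2 : D ^ p ≤ 2 ^ p := Real.rpow_le_rpow hD0 hD2 (by linarith)
  have hDp2' : D' ^ p ≤ 2 ^ p := Real.rpow_le_rpow hD0' hD2' (by linarith)
  have h2p : (0:ℝ) ≤ (2:ℝ) ^ p := Real.rpow_nonneg (by norm_num) p
  have hDp0' : 0 ≤ D' ^ p := Real.rpow_nonneg hD0' p
  rcases le_or_gt D D' with hDD | hDD
  · have hA : D ^ p ≤ D' ^ p := Real.rpow_le_rpow hD0 hDD (by linarith)
    nlinarith [mul_le_mul_of_nonneg_left hA hm.le,
      mul_le_mul_of_nonneg_right (show m - m' ≤ δ by linarith) hDp0',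
      mul_le_mul_of_nonneg_left hDp2' hδ,
      mul_nonneg (mul_nonneg (show (0:ℝ) ≤ 2*p-2 by linarith) h2p) hδ]
  · have hbern : D ^ p - D' ^ p ≤ p * D ^ (p-1) * (D - D') := myBern hD0' hDD.le hp1
    have hyoung : p * D ^ (p-1) * D' ≤ (p-1) * D ^ p + D' ^ p := myYoung hD0 hD0' hp
    have hDq : D ^ (p-1) ≤ 2 ^ (p-1) := Real.rpow_le_rpow hD0 hD2 hpm1
    have hDq0 : 0 ≤ D ^ (p-1) := Real.rpow_nonneg hD0 _
    have hpD : 0 ≤ p * D ^ (p-1) := mul_nonneg (by linarith) hDq0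
    have h2q : (2:ℝ) ^ (p-1) * 2 = 2 ^ p := by
      calc (2:ℝ) ^ (p-1) * 2 = 2 ^ (p-1) * 2 ^ (1:ℝ) := by rw [Real.rpow_one]
        _ = 2 ^ (p-1+1) := (Real.rpow_add (by norm_num) _ _).symm
        _ = 2 ^ p := by norm_num
    have s1 : m * D ^ p - m * D' ^ p ≤ p * D ^ (p-1) * (m * D - m * D') := by
      calc m * D ^ p - m * D' ^ p = m * (D ^ p - D' ^ p) := by ring
        _ ≤ m * (p * D ^ (p-1) * (D - D')) := mul_le_mul_of_nonneg_left hbern hm.le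
        _ = p * D ^ (p-1) * (m * D - m * D') := by ring
    have s2 : p * D ^ (p-1) * (m * D - m * D') ≤ p * D ^ (p-1) * ((m' - m) * D' + 2 * δ) :=
      mul_le_mul_of_nonneg_left (by nlinarith [h1]) hpD
    have s3 : m * D ^ p - m' * D' ^ p ≤
        (m' - m) * (p * D ^ (p-1) * D' - D' ^ p) + 2 * p * D ^ (p-1) * δ := by
      nlinarith [s1, s2]
    have hK0 : D' ^ p ≤ p * D ^ (p-1) * D' := by
      rcases hD0'.eq_or_lt with h0 | h0
      · rw [← h0]
        simp [Real.zero_rpow (show p ≠ 0 by linarith)]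
      · have e : D' ^ (p-1) * D' = D' ^ p := by
          calc D' ^ (p-1) * D' = D' ^ (p-1) * D' ^ (1:ℝ) := by rw [Real.rpow_one]
            _ = D' ^ (p-1+1) := (Real.rpow_add h0 _ _).symm
            _ = D' ^ p := by norm_num
        have hmono : D' ^ (p-1) ≤ D ^ (p-1) := Real.rpow_le_rpow hD0' hDD.le hpm1
        nlinarith [mul_le_mul_of_nonneg_right hmono h0.le,
          mul_nonneg hDq0 h0.le]
    have hKle : p * D ^ (p-1) * D' - D' ^ p ≤ (p-1) * 2 ^ p := by
      nlinarith [hyoung, mul_le_mul_of_nonneg_left hDp2 hpm1]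
    have s4 : (m' - m) * (p * D ^ (p-1) * D' - D' ^ p) ≤ δ * ((p-1) * 2 ^ p) :=
      mul_le_mul (by linarith) hKle (by linarith) hδ
    have s5 : 2 * p * D ^ (p-1) * δ ≤ p * 2 ^ p * δ := by
      have t1 : 2 * p * δ * D ^ (p-1) ≤ 2 * p * δ * 2 ^ (p-1) :=
        mul_le_mul_of_nonneg_left hDq (by positivity)
      rw [← h2q]; nlinarith [t1]
    linarith [s3, s4, s5]

lemma myAbs {p m m' D D' δ : ℝ} (hp : 1 < p) (hm : 0 < m) (hm' : 0 < m')
    (hD0 : 0 ≤ D) (hD2 : D ≤ 2) (hD0' : 0 ≤ D') (hD2' : D' ≤ 2) (hδ : 0 ≤ δ)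
    (h1 : m * D ≤ m' * D' + 2 * δ) (h1' : m' * D' ≤ m * D + 2 * δ)
    (h2 : m ≤ m' + δ) (h3 : m' ≤ m + δ) :
    |m * D ^ p - m' * D' ^ p| ≤ 2 ^ p * (2 * p - 1) * δ := by
  rw [abs_sub_le_iff]
  exact ⟨myOneSided hp hm hD0 hD2 hD0' hD2' hδ h1 h2 h3,
    myOneSided hp hm' hD0' hD2' hD0 hD2 hδ h1' h3 h2⟩


lemma exists_ball_volume {n : ℕ} (hn : 1 ≤ n) (x : EuclideanSpace ℝ (Fin n)) {v : ENNReal}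
    (h0 : 0 < v) (hfin : v < ⊤) : ∃ r : ℝ, volume (ball x r) = v := by
  haveI : Nonempty (Fin n) := ⟨⟨0, by omega⟩⟩
  set c : ℝ := Real.sqrt Real.pi ^ (Fintype.card (Fin n)) /
    Real.Gamma ((Fintype.card (Fin n)) / 2 + 1) with hc_def
  have hc : 0 < c := by
    apply div_pos (pow_pos (Real.sqrt_pos.2 Real.pi_pos) _)
    apply Real.Gamma_pos_of_pos
    have : (0:ℝ) ≤ (Fintype.card (Fin n) : ℝ) := Nat.cast_nonneg _
    positivity
  have hv0 : 0 < v.toReal := ENNReal.toReal_pos h0.ne' hfin.ne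
  set r : ℝ := (v.toReal / c) ^ ((n:ℝ)⁻¹) with hr_def
  have hr0 : 0 ≤ r := Real.rpow_nonneg (div_nonneg hv0.le hc.le) _
  refine ⟨r, ?_⟩
  rw [EuclideanSpace.volume_ball, ← hc_def, ← ENNReal.ofReal_pow hr0]
  have hrn : r ^ (Fintype.card (Fin n)) = v.toReal / c := by
    rw [Fintype.card_fin, ← Real.rpow_natCast r n, hr_def,
      ← Real.rpow_mul (div_nonneg hv0.le hc.le),
      inv_mul_cancel₀ (by exact_mod_cast (by omega : n ≠ 0) : (n:ℝ) ≠ 0), Real.rpow_one]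
  rw [hrn, ← ENNReal.ofReal_mul (div_nonneg hv0.le hc.le),
    div_mul_cancel₀ _ hc.ne', ENNReal.ofReal_toReal hfin.ne]

section frk
variable {n : ℕ} (E E' : Set (EuclideanSpace ℝ (Fin n)))

lemma frk_bddBelow : BddBelow {t : ℝ | ∃ (x : EuclideanSpace ℝ (Fin n)) (r : ℝ),
    volume (ball x r) = volume E ∧
    t = (volume (symmDiff E (ball x r))).toReal / (volume E).toReal} := by
  refine ⟨0, fun t ht => ?_⟩
  obtain ⟨x, r, -, rfl⟩ := ht
  exact div_nonneg ENNReal.toReal_nonneg ENNReal.toReal_nonneg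

lemma frk_nonneg : 0 ≤ fraenkelAsymmetry E := by
  apply Real.sInf_nonneg
  rintro t ⟨x, r, -, rfl⟩
  exact div_nonneg ENNReal.toReal_nonneg ENNReal.toReal_nonneg

lemma frk_le (x : EuclideanSpace ℝ (Fin n)) (r : ℝ) (h : volume (ball x r) = volume E) :
    fraenkelAsymmetry E ≤ (volume (symmDiff E (ball x r))).toReal / (volume E).toReal :=
  csInf_le (frk_bddBelow E) ⟨x, r, h, rfl⟩

lemma frk_le_two (hn : 1 ≤ n) (h0 : 0 < volume E) (hfin : volume E < ⊤) :
    fraenkelAsymmetry E ≤ 2 := by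
  obtain ⟨r, hr⟩ := exists_ball_volume hn (0 : EuclideanSpace ℝ (Fin n)) h0 hfin
  set B : Set (EuclideanSpace ℝ (Fin n)) := ball 0 r with hB
  refine (frk_le E 0 r hr).trans ?_
  rw [div_le_iff₀ (ENNReal.toReal_pos h0.ne' hfin.ne)]
  have h1 : volume (symmDiff E B) ≤ volume E + volume B :=
    (measure_mono symmDiff_subset_union).trans (measure_union_le _ _)
  rw [hB, hr] at h1
  have h2 : (volume (symmDiff E (ball (0 : EuclideanSpace ℝ (Fin n)) r))).toReal ≤ (volume E + volume E).toReal := by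
    apply ENNReal.toReal_mono _ h1
    simp [hfin.ne]
  rw [ENNReal.toReal_add hfin.ne hfin.ne] at h2
  linarith

end frk

lemma vol_le_vol_add_symmDiff (A B : Set (EuclideanSpace ℝ (Fin n))) :
    volume A ≤ volume B + volume (symmDiff A B) := by
  calc volume A ≤ volume (B ∪ symmDiff A B) := measure_mono (fun y hy => by
        by_cases hyB : y ∈ B
        · exact Or.inl hyB
        · exact Or.inr (Set.mem_symmDiff.2 (Or.inl ⟨hy, hyB⟩)))
    _ ≤ volume B + volume (symmDiff A B) := measure_union_le _ _

lemma frk_key {n : ℕ} (hn : 1 ≤ n) (E E' : Set (EuclideanSpace ℝ (Fin n)))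
    (h0 : 0 < volume E) (hfin : volume E < ⊤)
    (h0' : 0 < volume E') (hfin' : volume E' < ⊤) :
    (volume E').toReal * fraenkelAsymmetry E' ≤
      (volume E).toReal * fraenkelAsymmetry E + 2 * (volume (symmDiff E E')).toReal := by
  set m := (volume E).toReal with hm_def
  set m' := (volume E').toReal with hm'_def
  set δ := (volume (symmDiff E E')).toReal with hδ_def
  have hm : 0 < m := ENNReal.toReal_pos h0.ne' hfin.ne
  have hm' : 0 < m' := ENNReal.toReal_pos h0'.ne' hfin'.ne
  have hδfin : volume (symmDiff E E') ≠ ⊤ := by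
    refine ((measure_mono symmDiff_subset_union).trans_lt ?_).ne
    exact (measure_union_le _ _).trans_lt (ENNReal.add_lt_top.2 ⟨hfin, hfin'⟩)
  have key : ∀ t ∈ {t : ℝ | ∃ (x : EuclideanSpace ℝ (Fin n)) (r : ℝ),
      volume (ball x r) = volume E ∧
      t = (volume (symmDiff E (ball x r))).toReal / (volume E).toReal},
      (m' * fraenkelAsymmetry E' - 2 * δ) / m ≤ t := by
    rintro t ⟨x, r, hvol, rfl⟩
    obtain ⟨r', hvol'⟩ := exists_ball_volume hn x h0' hfin'
    have hD' : fraenkelAsymmetry E' ≤ (volume (symmDiff E' (ball x r'))).toReal / m' :=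
      frk_le E' x r' hvol'
    have hEB_fin : volume (symmDiff E (ball x r)) ≠ ⊤ := by
      refine ((measure_mono symmDiff_subset_union).trans_lt ?_).ne
      refine (measure_union_le _ _).trans_lt (ENNReal.add_lt_top.2 ⟨hfin, ?_⟩)
      rwa [hvol]
    have hBB : volume (symmDiff (ball x r) (ball x r')) ≤ volume (symmDiff E E') := by
      rcases le_total r r' with h | h
      · have hsub : ball x r ⊆ ball x r' := ball_subset_ball h
        rw [symmDiff_of_le hsub,
          measure_diff hsub measurableSet_ball.nullMeasurableSet (by rw [hvol]; exact hfin.ne),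
          hvol, hvol', tsub_le_iff_right]
        calc volume E' ≤ volume E + volume (symmDiff E' E) := vol_le_vol_add_symmDiff E' E
          _ = volume (symmDiff E E') + volume E := by rw [symmDiff_comm, add_comm]
      · have hsub : ball x r' ⊆ ball x r := ball_subset_ball h
        rw [symmDiff_comm, symmDiff_of_le hsub,
          measure_diff hsub measurableSet_ball.nullMeasurableSet (by rw [hvol']; exact hfin'.ne),
          hvol, hvol', tsub_le_iff_right]
        calc volume E ≤ volume E' + volume (symmDiff E E') := vol_le_vol_add_symmDiff E E'
          _ = volume (symmDiff E E') + volume E' := by rw [add_comm]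
    have tri : volume (symmDiff E' (ball x r')) ≤
        volume (symmDiff E E') + volume (symmDiff E (ball x r)) + volume (symmDiff E E') := by
      calc volume (symmDiff E' (ball x r'))
          ≤ volume (symmDiff E' E) + volume (symmDiff E (ball x r')) :=
            measure_symmDiff_le _ _ _
        _ ≤ volume (symmDiff E' E) + (volume (symmDiff E (ball x r)) +
              volume (symmDiff (ball x r) (ball x r'))) := by
            gcongr
            exact measure_symmDiff_le _ _ _
        _ ≤ volume (symmDiff E E') + volume (symmDiff E (ball x r)) + volume (symmDiff E E') := by
            rw [symmDiff_comm E' E]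
            calc _ ≤ volume (symmDiff E E') + (volume (symmDiff E (ball x r)) +
                  volume (symmDiff E E')) := by gcongr
              _ = _ := by ring
    have tri' : (volume (symmDiff E' (ball x r'))).toReal ≤
        δ + (volume (symmDiff E (ball x r))).toReal + δ := by
      have hrhs : volume (symmDiff E E') + volume (symmDiff E (ball x r)) +
          volume (symmDiff E E') ≠ ⊤ := by
        simp [hδfin, hEB_fin]
      have := ENNReal.toReal_mono hrhs tri
      rwa [ENNReal.toReal_add (by simp [hδfin, hEB_fin]) hδfin,
        ENNReal.toReal_add hδfin hEB_fin] at this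
    have hstep : m' * fraenkelAsymmetry E' ≤ (volume (symmDiff E' (ball x r'))).toReal := by
      have := mul_le_mul_of_nonneg_left hD' hm'.le
      rwa [mul_div_cancel₀ _ hm'.ne'] at this
    rw [div_le_div_iff_of_pos_right hm]
    linarith
  have hne : {t : ℝ | ∃ (x : EuclideanSpace ℝ (Fin n)) (r : ℝ),
      volume (ball x r) = volume E ∧
      t = (volume (symmDiff E (ball x r))).toReal / (volume E).toReal}.Nonempty := by
    obtain ⟨r, hr⟩ := exists_ball_volume hn (0 : EuclideanSpace ℝ (Fin n)) h0 hfin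
    exact ⟨_, ⟨0, r, hr, rfl⟩⟩
  have hfinal : (m' * fraenkelAsymmetry E' - 2 * δ) / m ≤ fraenkelAsymmetry E :=
    le_csInf hne key
  rw [div_le_iff₀ hm] at hfinal
  nlinarith [hfinal]

/-- Modulus of continuity for the `n/(n-1)` power of the Fraenkel asymmetry:
`| |E| D(E)^{n/(n−1)} − |E'| D(E')^{n/(n−1)} | ≤ 2^{n/(n−1)} (n+1)/(n−1) |E Δ E'|`. -/
theorem abs_measure_mul_fraenkel_rpow_sub_le {n : ℕ} (hn : 2 ≤ n)
    (E E' : Set (EuclideanSpace ℝ (Fin n)))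
    (hE : MeasurableSet E) (hE' : MeasurableSet E')
    (h0 : 0 < volume E) (hfin : volume E < ⊤)
    (h0' : 0 < volume E') (hfin' : volume E' < ⊤) :
    |(volume E).toReal * fraenkelAsymmetry E ^ ((n : ℝ) / ((n : ℝ) - 1)) -
      (volume E').toReal * fraenkelAsymmetry E' ^ ((n : ℝ) / ((n : ℝ) - 1))| ≤
      (2 : ℝ) ^ ((n : ℝ) / ((n : ℝ) - 1)) * (((n : ℝ) + 1) / ((n : ℝ) - 1)) *
        (volume (symmDiff E E')).toReal := by

  have hn1 : 1 ≤ n := by omega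
  have hn2 : (2:ℝ) ≤ (n:ℝ) := by exact_mod_cast hn
  have hnm1 : (0:ℝ) < (n:ℝ) - 1 := by linarith
  set p : ℝ := (n : ℝ) / ((n : ℝ) - 1) with hp_def
  have hp : 1 < p := (one_lt_div hnm1).2 (by linarith)
  set m := (volume E).toReal
  set m' := (volume E').toReal
  set δ := (volume (symmDiff E E')).toReal with hδ_def
  have hm : 0 < m := ENNReal.toReal_pos h0.ne' hfin.ne
  have hm' : 0 < m' := ENNReal.toReal_pos h0'.ne' hfin'.ne
  have hδfin : volume (symmDiff E E') ≠ ⊤ := by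
    refine ((measure_mono symmDiff_subset_union).trans_lt ?_).ne
    exact (measure_union_le _ _).trans_lt (ENNReal.add_lt_top.2 ⟨hfin, hfin'⟩)
  have hδ : 0 ≤ δ := ENNReal.toReal_nonneg
  have hD0 : 0 ≤ fraenkelAsymmetry E := frk_nonneg E
  have hD0' : 0 ≤ fraenkelAsymmetry E' := frk_nonneg E'
  have hD2 : fraenkelAsymmetry E ≤ 2 := frk_le_two E hn1 h0 hfin
  have hD2' : fraenkelAsymmetry E' ≤ 2 := frk_le_two E' hn1 h0' hfin'
  have h1' : m' * fraenkelAsymmetry E' ≤ m * fraenkelAsymmetry E + 2 * δ :=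
    frk_key hn1 E E' h0 hfin h0' hfin'
  have h1 : m * fraenkelAsymmetry E ≤ m' * fraenkelAsymmetry E' + 2 * δ := by
    have := frk_key hn1 E' E h0' hfin' h0 hfin
    rwa [symmDiff_comm E' E] at this
  have h2 : m ≤ m' + δ := by
    have h := vol_le_vol_add_symmDiff E E'
    have := ENNReal.toReal_mono (by simp [hfin'.ne, hδfin]) h
    rwa [ENNReal.toReal_add hfin'.ne hδfin] at this
  have h3 : m' ≤ m + δ := by
    have h := vol_le_vol_add_symmDiff E' E
    have := ENNReal.toReal_mono (by simp [hfin.ne, hδfin, symmDiff_comm E' E]) h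
    rwa [ENNReal.toReal_add hfin.ne (by rwa [symmDiff_comm E' E]), symmDiff_comm E' E] at this
  have habs := myAbs hp hm hm' hD0 hD2 hD0' hD2' hδ h1 h1' h2 h3
  have hconst : ((n:ℝ) + 1) / ((n:ℝ) - 1) = 2 * p - 1 := by
    rw [hp_def]
    field_simp
    ring
  rw [hconst]
  exact habs
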